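/- Assume x̄ ≠ 0 and 0 ≤ ε̃ ≤ ‖x̄‖²/(9√2). Fix λ ∈ (1/(9√2), 3/5] and set ρ = (1−λ)‖x̄‖/√3. Then for every x ∈ ℝⁿ at least one of the following holds: (i) 6⟨x,x̄⟩² + 3‖x‖²‖x̄‖² − 3‖x̄‖⁴ − ε̃‖x̄‖² ≤ −(1/100)‖x‖²‖x̄‖² − (1/50)‖x̄‖⁴ (negative-curvature region); (ii) ⟨x, ∇g(x)⟩ ≥ (1/500)‖x‖²‖x̄‖² + (1/100)‖x‖⁴ (large radial gradient); (iii) ‖x‖ ≥ (11/20)‖x̄‖ and there exists s ∈ {−1, 1} with ‖x − s·x̄‖ = min(‖x − x̄‖, ‖x + x̄‖) > 0 and ⟨x − s·x̄, ∇g(x)⟩ ≥ (1/250)·‖x‖·‖x̄‖²·‖x − s·x̄‖ (large gradient in the direction away from the nearest true signal); (iv) min(‖x − x̄‖, ‖x + x̄‖) ≤ ρ (region of strong convexity around the true signals). -/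
import Mathlib


open scoped RealInnerProductSpace BigOperators

/-- The expectation `g` of the noisy phase-retrieval objective (up to an additive constant). -/
noncomputable def gObj (n : ℕ) (xbar : EuclideanSpace ℝ (Fin n)) (εt : ℝ)
    (x : EuclideanSpace ℝ (Fin n)) : ℝ :=
  (3 / 4) * (‖x‖ ^ 4 + ‖xbar‖ ^ 4) - (1 / 2) * ‖xbar‖ ^ 2 * ‖x‖ ^ 2 - ⟪xbar, x⟫ ^ 2
    - (εt / 2) * (‖x‖ ^ 2 - ‖xbar‖ ^ 2)

/-- The gradient of `g`. -/
noncomputable def gGrad (n : ℕ) (xbar : EuclideanSpace ℝ (Fin n)) (εt : ℝ)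
    (x : EuclideanSpace ℝ (Fin n)) : EuclideanSpace ℝ (Fin n) :=
  (3 * ‖x‖ ^ 2) • x - (2 * ⟪xbar, x⟫) • xbar - (‖xbar‖ ^ 2 + εt) • x

theorem key_poly (a r τ e : ℝ) (ha : 0 < a) (hr : 0 ≤ r)
    (h1 : 0 ≤ τ) (h2 : τ ≤ r * a) (h3 : 0 ≤ e) (h4 : e ≤ (2/25) * a^2)
    (hA : 6*τ^2 + 3*r^2*a^2 - 3*a^4 - e*a^2 > -(1/100)*r^2*a^2 - (1/50)*a^4)
    (hd : r^2 + a^2 - 2*τ > (4/75)*a^2) :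
    3*r^4 - 2*τ^2 - (a^2+e)*r^2 - τ*(3*r^2-3*a^2-e) ≥ (1/55)*a*r*(r^2+a^2-2*τ) := by
  nlinarith [mul_pos ha ha, mul_nonneg hr ha.le, sq_nonneg (r^2 - τ), sq_nonneg (r^2 - a^2),
    sq_nonneg (a^2 - τ), mul_nonneg h1 (sub_nonneg.2 h2), mul_nonneg (sub_nonneg.2 h2) (sub_nonneg.2 h2),
    mul_nonneg (mul_nonneg ha.le ha.le) (sub_nonneg.2 h4), mul_nonneg h3 (sub_nonneg.2 h4),
    mul_pos (mul_pos ha ha) (by linarith : (0:ℝ) < r^2 + a^2 - 2*τ - (4/75)*a^2),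
    mul_pos (mul_pos ha ha) (by nlinarith [mul_nonneg hr ha.le, sq_nonneg (r*a-τ)] : (0:ℝ) < 6*τ^2 + (301/100)*r^2*a^2 - (149/50)*a^4 - e*a^2) ,
    mul_nonneg h1 (by linarith : (0:ℝ) ≤ r^2 + a^2 - 2*τ),
    mul_nonneg (mul_nonneg hr ha.le) (by linarith : (0:ℝ) ≤ r^2 + a^2 - 2*τ),
    sq_nonneg (r - a), sq_nonneg (r*a - τ), mul_nonneg (mul_nonneg hr hr) (sq_nonneg (r-a)),
    mul_nonneg (mul_nonneg ha.le ha.le) (sq_nonneg (r-a)), mul_nonneg (mul_nonneg hr ha.le) (sq_nonneg (r-a))]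

theorem r_lb_aux (a r t e : ℝ) (ha : 0 < a) (hr : 0 ≤ r)
    (ht2le : t^2 ≤ r^2 * a^2) (he : 0 ≤ e)
    (hA : -(1/100)*r^2*a^2 - (1/50)*a^4 < 6*t^2 + 3*r^2*a^2 - 3*a^4 - e*a^2) :
    r ≥ (11/20) * a := by
  nlinarith [mul_pos ha ha, mul_nonneg (mul_nonneg ha.le ha.le) he,
    mul_nonneg (mul_nonneg ha.le ha.le) (show (0:ℝ) ≤ (11/20)*a + r by linarith)]

theorem fin_aux (a r d : ℝ) (ha : 0 < a) (hr : 0 ≤ r) (hd0 : 0 ≤ d)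
    (hd11 : (11/50)*a ≤ d) :
    (1/55)*a*r*d^2 ≥ (1/250)*r*a^2*d := by
  nlinarith [mul_nonneg (mul_nonneg (mul_nonneg ha.le hr) hd0) (by linarith : (0:ℝ) ≤ d - (11/50)*a)]

set_option maxHeartbeats 1000000 in
/-- covering of `ℝⁿ` by the negative-curvature region, the
large-gradient regions and the strong-convexity region, for the expected
objective `g`. -/
theorem stmt19 (n : ℕ) (xbar : EuclideanSpace ℝ (Fin n)) (hxbar : xbar ≠ 0)
    (εt : ℝ) (hεt0 : 0 ≤ εt) (hεt1 : εt ≤ ‖xbar‖ ^ 2 / (9 * Real.sqrt 2))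
    (lam : ℝ) (hlam1 : 1 / (9 * Real.sqrt 2) < lam) (hlam2 : lam ≤ 3 / 5)
    (ρ : ℝ) (hρ : ρ = (1 - lam) * ‖xbar‖ / Real.sqrt 3) :
    ∀ x : EuclideanSpace ℝ (Fin n),
      (6 * ⟪x, xbar⟫ ^ 2 + 3 * ‖x‖ ^ 2 * ‖xbar‖ ^ 2 - 3 * ‖xbar‖ ^ 4 - εt * ‖xbar‖ ^ 2 ≤
        -(1 / 100) * ‖x‖ ^ 2 * ‖xbar‖ ^ 2 - (1 / 50) * ‖xbar‖ ^ 4) ∨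
      (⟪x, gGrad n xbar εt x⟫ ≥ (1 / 500) * ‖x‖ ^ 2 * ‖xbar‖ ^ 2 + (1 / 100) * ‖x‖ ^ 4) ∨
      (‖x‖ ≥ (11 / 20) * ‖xbar‖ ∧ ∃ s : ℝ, (s = 1 ∨ s = -1) ∧
        ‖x - s • xbar‖ = min ‖x - xbar‖ ‖x + xbar‖ ∧ 0 < ‖x - s • xbar‖ ∧
        ⟪x - s • xbar, gGrad n xbar εt x⟫ ≥
          (1 / 250) * ‖x‖ * ‖xbar‖ ^ 2 * ‖x - s • xbar‖) ∨
      (min ‖x - xbar‖ ‖x + xbar‖ ≤ ρ) := by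
  intro x
  set a := ‖xbar‖ with ha_def
  set r := ‖x‖ with hr_def
  set t := ⟪x, xbar⟫ with ht_def
  have ha : 0 < a := norm_pos_iff.mpr hxbar
  have hr : 0 ≤ r := norm_nonneg x
  have hs2 : (25/18 : ℝ) ≤ Real.sqrt 2 := by
    have h := Real.sqrt_le_sqrt (show ((25/18:ℝ))^2 ≤ 2 by norm_num)
    rwa [Real.sqrt_sq (by norm_num)] at h
  have hs3 : Real.sqrt 3 ≤ 20/11 := by
    have h := Real.sqrt_le_sqrt (show (3:ℝ) ≤ (20/11)^2 by norm_num)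
    rwa [Real.sqrt_sq (by norm_num)] at h
  have hs3pos : 0 < Real.sqrt 3 := Real.sqrt_pos.mpr (by norm_num)
  have hεt2 : εt ≤ (2/25) * a^2 := by
    have h3 : a^2 / (9 * Real.sqrt 2) ≤ (2/25) * a^2 := by
      rw [div_le_iff₀ (by positivity)]
      linarith only [mul_nonneg (sq_nonneg a) (by linarith only [hs2] : (0:ℝ) ≤ Real.sqrt 2 - 25/18)]
    linarith
  by_cases hA : 6 * t ^ 2 + 3 * r ^ 2 * a ^ 2 - 3 * a ^ 4 - εt * a ^ 2 ≤
      -(1 / 100) * r ^ 2 * a ^ 2 - (1 / 50) * a ^ 4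
  · exact Or.inl hA
  push_neg at hA
  by_cases hD : min ‖x - xbar‖ ‖x + xbar‖ ≤ ρ
  · exact Or.inr (Or.inr (Or.inr hD))
  push_neg at hD
  refine Or.inr (Or.inr (Or.inl ?_))
  have hbx : ⟪xbar, x⟫ = t := by rw [real_inner_comm]
  have hxx : ⟪x, x⟫ = r^2 := real_inner_self_eq_norm_sq x
  have hbb : ⟪xbar, xbar⟫ = a^2 := real_inner_self_eq_norm_sq xbar
  have hgx : ⟪x, gGrad n xbar εt x⟫ = 3*r^4 - 2*t^2 - (a^2+εt)*r^2 := by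
    simp only [gGrad, inner_sub_right, real_inner_smul_right, hbx, hxx, ← ht_def,
      ← hr_def, ← ha_def]
    all_goals ring
  have hgb : ⟪xbar, gGrad n xbar εt x⟫ = 3*r^2*t - 2*t*a^2 - (a^2+εt)*t := by
    simp only [gGrad, inner_sub_right, real_inner_smul_right, hbx, hbb, ← ht_def,
      ← hr_def, ← ha_def]
    all_goals ring
  have hm1 : ‖x - xbar‖^2 = r^2 - 2*t + a^2 := by
    rw [@norm_sub_sq_real, ← ht_def, ← hr_def, ← ha_def]
    all_goals ring
  have hp1 : ‖x + xbar‖^2 = r^2 + 2*t + a^2 := by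
    rw [@norm_add_sq_real, ← ht_def, ← hr_def, ← ha_def]
    all_goals ring
  obtain ⟨s, hs1, hst, hyeq⟩ : ∃ s : ℝ, (s = 1 ∨ s = -1) ∧ s * t = |t| ∧
      ‖x - s • xbar‖ = min ‖x - xbar‖ ‖x + xbar‖ := by
    rcases le_or_gt 0 t with h | h
    · refine ⟨1, Or.inl rfl, by rw [one_mul, abs_of_nonneg h], ?_⟩
      rw [one_smul]
      refine (min_eq_left ?_).symm
      rw [← Real.sqrt_sq (norm_nonneg (x - xbar)), ← Real.sqrt_sq (norm_nonneg (x + xbar))]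
      exact Real.sqrt_le_sqrt (by rw [hm1, hp1]; linarith)
    · refine ⟨-1, Or.inr rfl, by rw [abs_of_neg h]; ring, ?_⟩
      rw [neg_smul, one_smul, sub_neg_eq_add]
      refine (min_eq_right ?_).symm
      rw [← Real.sqrt_sq (norm_nonneg (x - xbar)), ← Real.sqrt_sq (norm_nonneg (x + xbar))]
      exact Real.sqrt_le_sqrt (by rw [hm1, hp1]; linarith)
  have habs : |s| = 1 := by rcases hs1 with h | h <;> simp [h]
  set τ := |t| with hτ_def
  have hτ0 : 0 ≤ τ := abs_nonneg t
  have ht2 : t^2 = τ^2 := (sq_abs t).symm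
  have hτr : τ ≤ r * a := by
    have h := abs_real_inner_le_norm x xbar
    rw [← ht_def, ← hr_def, ← ha_def] at h
    exact h
  have hd2 : ‖x - s • xbar‖^2 = r^2 + a^2 - 2*τ := by
    rw [@norm_sub_sq_real, real_inner_smul_right, norm_smul, Real.norm_eq_abs, habs,
      ← ht_def, hst]
    rw [← hr_def, ← ha_def]
    all_goals ring
  have hρd : ρ < ‖x - s • xbar‖ := by rw [hyeq]; exact hD
  have hlam' : 2/5 ≤ 1 - lam := by linarith
  have hρlow : (11/50) * a ≤ ρ := by
    rw [hρ, le_div_iff₀ hs3pos]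
    linarith only [mul_le_mul_of_nonneg_left hs3 (show (0:ℝ) ≤ (11/50)*a by linarith only [ha]),
      mul_le_mul_of_nonneg_right hlam' ha.le]
  have hρpos : 0 < ρ := lt_of_lt_of_le (by linarith only [ha] : (0:ℝ) < (11/50)*a) hρlow
  have hdpos : 0 < ‖x - s • xbar‖ := hρpos.trans hρd
  have hρ2 : (4/75) * a^2 ≤ ρ^2 := by
    rw [hρ, div_pow, Real.sq_sqrt (by norm_num : (0:ℝ) ≤ 3)]
    have h := mul_le_mul_of_nonneg_right hlam' ha.le
    linarith only [mul_nonneg (sub_nonneg.2 h)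
      (by linarith only [h, ha] : (0:ℝ) ≤ (1-lam)*a + (2/5)*a)]
  have hd2gt : (4/75) * a^2 < ‖x - s • xbar‖^2 := by
    nlinarith only [hρ2, hρd, hρpos, hdpos]
  have ht2le : t^2 ≤ r^2 * a^2 := by
    nlinarith only [hτr, hτ0, ht2, mul_nonneg hr ha.le]
  have hr11 : r ≥ (11/20) * a := r_lb_aux a r t εt ha hr ht2le hεt0 hA
  refine ⟨hr11, s, hs1, hyeq, hdpos, ?_⟩
  have hgy : ⟪x - s • xbar, gGrad n xbar εt x⟫ =
      3*r^4 - 2*t^2 - (a^2+εt)*r^2 - s*t*(3*r^2 - 3*a^2 - εt) := by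
    rw [inner_sub_left, real_inner_smul_left, hgx, hgb]
    ring
  rw [ht2, hst] at hgy
  have hkey := key_poly a r τ εt ha hr hτ0 hτr hεt0 hεt2 (by linarith only [hA, ht2]) (by linarith only [hd2gt, hd2])
  have hd11 : (11/50) * a ≤ ‖x - s • xbar‖ := le_of_lt (lt_of_le_of_lt hρlow hρd)
  have hfin := fin_aux a r (‖x - s • xbar‖) ha hr (norm_nonneg _) hd11
  rw [hd2] at hfin
  rw [hgy]
  linarith only [hkey, hfin]
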